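/- Let A be a finite directed graph with rational edge weights and a designated initial vertex, where every infinite path corresponds to a run. If there exists an infinite path from the initial vertex of limit-average value ≤ λ, then there exists a 'lasso': a finite path from the initial vertex reaching a cycle whose average edge weight is ≤ λ. -/

import Mathlib

open Filter Finset

private lemma sum_range_split {M : Type*} [AddCommMonoid M] (f : ℕ → M) (m n : ℕ) :
    ∑ i ∈ Finset.range (m + n), f i
      = (∑ i ∈ Finset.range m, f i) + ∑ i ∈ Finset.range n, f (m + i) := by
  induction n with
  | zero => simp
  | succ n ih => rw [Nat.add_succ, Finset.sum_range_succ, Finset.sum_range_succ, ih, add_assoc]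

/-- If a finite weighted graph has an infinite path from `v0` of limit-average
value `≤ λ`, then it has a lasso from `v0` whose cycle has average weight `≤ λ`. -/
theorem lasso_of_limAvg_le {V : Type*} [Fintype V]
    (E : V → V → Prop) (wt : V → V → ℚ) (v0 : V) (lam : ℝ)
    (h : ∃ π : ℕ → V, π 0 = v0 ∧ (∀ i, E (π i) (π (i + 1))) ∧
      Filter.limsup
        (fun k => (∑ i ∈ Finset.range k, (wt (π i) (π (i + 1)) : ℝ)) / (k : ℝ))
        atTop ≤ lam) :
    ∃ (σ : ℕ → V) (s ℓ : ℕ), 0 < ℓ ∧ σ 0 = v0 ∧ (∀ i, E (σ i) (σ (i + 1))) ∧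
      (∀ i, s ≤ i → σ (i + ℓ) = σ i) ∧
      (∑ j ∈ Finset.range ℓ, (wt (σ (s + j)) (σ (s + j + 1)) : ℝ)) / (ℓ : ℝ) ≤ lam := by
  classical
  obtain ⟨π, hπ0, hπE, hπavg⟩ := h
  -- Step 1: find a "good cycle": a cycle based at some vertex of π with average ≤ lam.
  have key : ∃ (c : ℕ → V) (t ℓ : ℕ), 0 < ℓ ∧ c 0 = π t ∧ c ℓ = c 0 ∧
      (∀ i < ℓ, E (c i) (c (i + 1))) ∧
      (∑ j ∈ Finset.range ℓ, (wt (c j) (c (j + 1)) : ℝ)) ≤ lam * ℓ := by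
    by_contra hno
    push_neg at hno
    haveI : Nonempty V := ⟨v0⟩
    set n := Fintype.card V with hn
    have hnpos : 0 < n := Fintype.card_pos
    set S : Finset ℝ := ((Finset.Icc 1 n) ×ˢ (Finset.univ : Finset (Fin (n + 1) → V))).image
      (fun p => (∑ j ∈ Finset.range p.1,
        (wt (p.2 ⟨min j n, by omega⟩) (p.2 ⟨min (j + 1) n, by omega⟩) : ℝ)) / (p.1 : ℝ))
      with hS
    have hmemS : ∀ (c : ℕ → V) (ℓ : ℕ), 0 < ℓ → ℓ ≤ n →
        (∑ j ∈ Finset.range ℓ, (wt (c j) (c (j + 1)) : ℝ)) / (ℓ : ℝ) ∈ S := by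
      intro c ℓ h1 h2
      rw [hS]
      apply Finset.mem_image.2
      refine ⟨(ℓ, fun i => c i.val),
        Finset.mem_product.2 ⟨Finset.mem_Icc.2 ⟨h1, h2⟩, Finset.mem_univ _⟩, ?_⟩
      congr 1
      apply Finset.sum_congr rfl
      intro j hj
      have hj' : j < ℓ := Finset.mem_range.1 hj
      have e1 : min j n = j := min_eq_left (by omega)
      have e2 : min (j + 1) n = j + 1 := min_eq_left (by omega)
      simp only [e1, e2]
    set T : Finset ℝ := S.filter (fun x => lam < x) with hT
    set ε : ℝ := if hTne : T.Nonempty then T.min' hTne - lam else 1 with hε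
    have hεpos : 0 < ε := by
      rw [hε]; split_ifs with hTne
      · have h2 : lam < T.min' hTne := (Finset.mem_filter.1 (T.min'_mem hTne)).2
        linarith
      · norm_num
    have hεle : ∀ x ∈ T, lam + ε ≤ x := by
      intro x hx
      have hTne : T.Nonempty := ⟨x, hx⟩
      rw [hε, dif_pos hTne]
      have := T.min'_le x hx
      linarith
    have hcycle : ∀ (c : ℕ → V) (t ℓ : ℕ), 0 < ℓ → ℓ ≤ n → c 0 = π t → c ℓ = c 0 →
        (∀ i < ℓ, E (c i) (c (i + 1))) →
        (lam + ε) * ℓ ≤ ∑ j ∈ Finset.range ℓ, (wt (c j) (c (j + 1)) : ℝ) := by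
      intro c t ℓ h1 h2 h3 h4 h5
      have hlt := hno c t ℓ h1 h3 h4 h5
      have hpos : (0 : ℝ) < ℓ := by exact_mod_cast h1
      have havg : lam < (∑ j ∈ Finset.range ℓ, (wt (c j) (c (j + 1)) : ℝ)) / ℓ :=
        (lt_div_iff₀ hpos).2 hlt
      have hmem : _ ∈ T := Finset.mem_filter.2 ⟨hmemS c ℓ h1 h2, havg⟩
      have h6 := hεle _ hmem
      rw [le_div_iff₀ hpos] at h6
      exact h6
    set B : ℝ := ∑ p : V × V, |(wt p.1 p.2 : ℝ)| with hB
    have hBle : ∀ u v : V, |(wt u v : ℝ)| ≤ B := by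
      intro u v
      rw [hB]
      exact Finset.single_le_sum (f := fun p : V × V => |(wt p.1 p.2 : ℝ)|)
        (fun p _ => abs_nonneg _) (Finset.mem_univ (u, v))
    have hB0 : 0 ≤ B := le_trans (abs_nonneg _) (hBle v0 v0)
    set C : ℝ := n * |lam + ε| + n * B with hC
    have main : ∀ k (w : ℕ → V), (∀ i < k, E (w i) (w (i + 1))) → (∀ i, ∃ t, w i = π t) →
        (lam + ε) * k - C ≤ ∑ i ∈ Finset.range k, (wt (w i) (w (i + 1)) : ℝ) := by
      intro k
      induction k using Nat.strong_induction_on with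
      | _ k IH =>
        intro w hwE hwπ
        by_cases hk : k ≤ n
        · have h1 : ∀ i ∈ Finset.range k, -B ≤ (wt (w i) (w (i + 1)) : ℝ) :=
            fun i _ => neg_le_of_abs_le (hBle _ _)
          have h2 : -(k * B) ≤ ∑ i ∈ Finset.range k, (wt (w i) (w (i + 1)) : ℝ) := by
            calc -(k * B) = ∑ _i ∈ Finset.range k, (-B) := by
                  simp [mul_comm]
              _ ≤ _ := Finset.sum_le_sum h1
          have h3 : (lam + ε) * k ≤ n * |lam + ε| := by
            have h4 : (k : ℝ) ≤ n := by exact_mod_cast hk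
            have h5 : (0 : ℝ) ≤ k := Nat.cast_nonneg k
            nlinarith [le_abs_self (lam + ε), abs_nonneg (lam + ε)]
          have h6 : (k : ℝ) * B ≤ n * B := by
            have h4 : (k : ℝ) ≤ n := by exact_mod_cast hk
            nlinarith
          rw [hC]
          linarith
        · push_neg at hk
          have step : ∀ a b : ℕ, a < b → b ≤ n → w a = w b →
              (lam + ε) * k - C ≤ ∑ i ∈ Finset.range k, (wt (w i) (w (i + 1)) : ℝ) := by
            intro a b hab hbn hw
            set ℓ := b - a with hℓdef
            have hℓpos : 0 < ℓ := by omega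
            have hℓn : ℓ ≤ n := by omega
            set w' : ℕ → V := fun i => if i < a then w i else w (i + ℓ) with hw'
            have hab' : a + ℓ = b := by omega
            have hwba : w (a + ℓ) = w a := by rw [hab']; exact hw.symm
            have hw'E : ∀ i < k - ℓ, E (w' i) (w' (i + 1)) := by
              intro i hi
              by_cases h1 : i + 1 < a
              · have h2 : i < a := by omega
                simp only [hw', if_pos h1, if_pos h2]
                exact hwE i (by omega)
              · by_cases h2 : i < a
                · have h3 : i + 1 = a := by omega
                  simp only [hw', if_pos h2, if_neg h1]
                  rw [h3, hwba, ← h3]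
                  exact hwE i (by omega)
                · simp only [hw', if_neg h1, if_neg h2]
                  have h3 : i + 1 + ℓ = (i + ℓ) + 1 := by omega
                  rw [h3]
                  exact hwE (i + ℓ) (by omega)
            have hw'π : ∀ i, ∃ t, w' i = π t := by
              intro i; by_cases h1 : i < a
              · simpa [hw', if_pos h1] using hwπ i
              · simpa [hw', if_neg h1] using hwπ (i + ℓ)
            have hIH := IH (k - ℓ) (by omega) w' hw'E hw'π
            obtain ⟨t, ht⟩ := hwπ a
            have hcyc := hcycle (fun j => w (a + j)) t ℓ hℓpos hℓn (by simpa using ht)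
              (by simpa using hwba) (fun j hj => hwE (a + j) (by omega))
            set m := k - b with hm
            have hsum : ∑ i ∈ Finset.range k, (wt (w i) (w (i + 1)) : ℝ)
                = (∑ i ∈ Finset.range (k - ℓ), (wt (w' i) (w' (i + 1)) : ℝ))
                  + ∑ j ∈ Finset.range ℓ, (wt (w (a + j)) (w (a + j + 1)) : ℝ) := by
              have e1 : k = a + (ℓ + m) := by omega
              have e2 : k - ℓ = a + m := by omega
              rw [e2, e1, sum_range_split, sum_range_split, sum_range_split]
              have c1 : ∀ i ∈ Finset.range a,
                  (wt (w' i) (w' (i + 1)) : ℝ) = (wt (w i) (w (i + 1)) : ℝ) := by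
                intro i hi
                have hi' : i < a := Finset.mem_range.1 hi
                by_cases h1 : i + 1 < a
                · simp only [hw', if_pos h1, if_pos hi']
                · have h3 : i + 1 = a := by omega
                  simp only [hw', if_pos hi', if_neg h1]
                  rw [h3, hwba, ← h3]
              have c2 : ∀ i ∈ Finset.range m,
                  (wt (w' (a + i)) (w' (a + i + 1)) : ℝ)
                    = (wt (w (a + (ℓ + i))) (w (a + (ℓ + i) + 1)) : ℝ) := by
                intro i hi
                have h1 : ¬ a + i < a := by omega
                have h2 : ¬ a + i + 1 < a := by omega
                simp only [hw', if_neg h1, if_neg h2]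
                have e3 : a + i + ℓ = a + (ℓ + i) := by omega
                have e4 : a + i + 1 + ℓ = a + (ℓ + i) + 1 := by omega
                rw [e3, e4]
              rw [Finset.sum_congr rfl c1, Finset.sum_congr rfl c2]
              have e5 : ∀ j ∈ Finset.range ℓ,
                  (wt (w (a + j)) (w (a + (j + 1))) : ℝ)
                    = (wt (w (a + j)) (w (a + j + 1)) : ℝ) := by
                intro j _
                rw [show a + (j + 1) = a + j + 1 from rfl]
              ring
            have hcast : ((k - ℓ : ℕ) : ℝ) = (k : ℝ) - (ℓ : ℝ) :=
              Nat.cast_sub (by omega)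
            have hfin : (lam + ε) * k - C
                = ((lam + ε) * ((k - ℓ : ℕ) : ℝ) - C) + (lam + ε) * ℓ := by
              rw [hcast]; ring
            rw [hfin, hsum]
            exact add_le_add hIH hcyc
          obtain ⟨i0, j0, hne, heq⟩ :=
            Fintype.exists_ne_map_eq_of_card_lt (fun i : Fin (n + 1) => w i.val)
              (by simp [hn])
          rcases lt_or_gt_of_ne (fun hv => hne (Fin.ext hv) : i0.val ≠ j0.val) with hlt | hlt
          · exact step i0.val j0.val hlt (by have := j0.isLt; omega) heq
          · exact step j0.val i0.val hlt (by have := i0.isLt; omega) heq.symm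
    have hlb : ∀ k : ℕ, (lam + ε) * k - C
        ≤ ∑ i ∈ Finset.range k, (wt (π i) (π (i + 1)) : ℝ) :=
      fun k => main k π (fun i _ => hπE i) (fun i => ⟨i, rfl⟩)
    have hub : ∀ k : ℕ,
        (∑ i ∈ Finset.range k, (wt (π i) (π (i + 1)) : ℝ)) / (k : ℝ) ≤ B := by
      intro k
      rcases Nat.eq_zero_or_pos k with hk | hk
      · subst hk; simpa using hB0
      · have hkpos : (0 : ℝ) < k := by exact_mod_cast hk
        rw [div_le_iff₀ hkpos]
        calc ∑ i ∈ Finset.range k, (wt (π i) (π (i + 1)) : ℝ)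
            ≤ ∑ _i ∈ Finset.range k, B :=
              Finset.sum_le_sum (fun i _ => le_trans (le_abs_self _) (hBle _ _))
          _ = B * k := by simp [mul_comm]
    have hbdd : IsBoundedUnder (· ≤ ·) atTop
        (fun k : ℕ => (∑ i ∈ Finset.range k, (wt (π i) (π (i + 1)) : ℝ)) / (k : ℝ)) :=
      isBoundedUnder_of ⟨B, hub⟩
    have htend : Tendsto (fun k : ℕ => C / (k : ℝ)) atTop (nhds 0) :=
      tendsto_const_div_atTop_nhds_zero_nat C
    have h1 : ∀ᶠ k : ℕ in atTop, C / (k : ℝ) < ε / 2 :=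
      htend.eventually_lt_const (by linarith)
    have hev : ∀ᶠ k : ℕ in atTop, lam + ε / 2
        ≤ (∑ i ∈ Finset.range k, (wt (π i) (π (i + 1)) : ℝ)) / (k : ℝ) := by
      filter_upwards [h1, eventually_ge_atTop 1] with k hk1 hk2
      have hkpos : (0 : ℝ) < k := by exact_mod_cast hk2
      have h2 : C < ε / 2 * k := by
        rw [div_lt_iff₀ hkpos] at hk1; linarith
      rw [le_div_iff₀ hkpos]
      have h3 := hlb k
      nlinarith
    have h4 := le_limsup_of_frequently_le hev.frequently hbdd
    linarith [hπavg]
  -- Step 2: build the lasso from the good cycle.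
  obtain ⟨c, t, ℓ, hℓ, hc0, hcℓ, hcE, hcsum⟩ := key
  refine ⟨fun i => if i < t then π i else c ((i - t) % ℓ), t, ℓ, hℓ, ?_, ?_, ?_, ?_⟩
  · by_cases ht : 0 < t
    · simp [ht, hπ0]
    · have ht0 : t = 0 := by omega
      subst ht0
      simpa [Nat.mod_eq_of_lt hℓ, hc0] using hπ0  -- 0 % ℓ = 0
  · intro i
    by_cases h1 : i + 1 < t
    · have h2 : i < t := by omega
      simp only [if_pos h1, if_pos h2]
      exact hπE i
    · by_cases h2 : i < t
      · -- i + 1 = t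
        have ht : i + 1 = t := by omega
        simp only [if_pos h2, if_neg h1]
        have : (i + 1 - t) % ℓ = 0 := by simp [ht]
        rw [this, hc0, ← ht]
        exact hπE i
      · -- i ≥ t
        simp only [if_neg h1, if_neg h2]
        have hi : t ≤ i := by omega
        have hstep : i + 1 - t = (i - t) + 1 := by omega
        rw [hstep]
        set m := (i - t) % ℓ with hm
        have hmlt : m < ℓ := Nat.mod_lt _ hℓ
        have hdm := Nat.div_add_mod (i - t) ℓ
        by_cases hml : m + 1 < ℓ
        · have : (i - t + 1) % ℓ = m + 1 := by
            rw [show i - t + 1 = ℓ * ((i - t) / ℓ) + (m + 1) by omega,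
              Nat.mul_add_mod, Nat.mod_eq_of_lt hml]
          rw [this]
          exact hcE m hmlt
        · have hmeq : m + 1 = ℓ := by omega
          have : (i - t + 1) % ℓ = 0 := by
            rw [show i - t + 1 = ℓ * ((i - t) / ℓ) + ℓ by omega, Nat.mul_add_mod, Nat.mod_self]
          rw [this, ← hcℓ, ← hmeq]
          exact hcE m hmlt
  · intro i hi
    have h1 : ¬ i + ℓ < t := by omega
    have h2 : ¬ i < t := by omega
    simp only [if_neg h1, if_neg h2]
    congr 1
    have : i + ℓ - t = (i - t) + ℓ := by omega
    rw [this, Nat.add_mod_right]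
  · have hterm : ∀ j < ℓ,
        (wt ((fun i => if i < t then π i else c ((i - t) % ℓ)) (t + j))
            ((fun i => if i < t then π i else c ((i - t) % ℓ)) (t + j + 1)) : ℝ)
          = (wt (c j) (c (j + 1)) : ℝ) := by
      intro j hj
      have h1 : ¬ t + j < t := by omega
      have h2 : ¬ t + j + 1 < t := by omega
      simp only [if_neg h1, if_neg h2]
      have e1 : (t + j - t) % ℓ = j := by
        rw [Nat.add_sub_cancel_left, Nat.mod_eq_of_lt hj]
      have e2 : t + j + 1 - t = j + 1 := by omega
      rw [e1, e2]
      by_cases hjl : j + 1 < ℓ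
      · rw [Nat.mod_eq_of_lt hjl]
      · have : j + 1 = ℓ := by omega
        rw [this, Nat.mod_self, hcℓ]
    rw [Finset.sum_congr rfl (fun j hj => hterm j (Finset.mem_range.1 hj)),
      div_le_iff₀ (by exact_mod_cast hℓ)]
    exact hcsum
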